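/- For all m, n ∈ ℕ with m < n, if κ_m ≥ n then κ_m ≥ κ_n. -/

import Mathlib

open Set

/-- Given nonnegative reals `(T n)` and `(D n)` taking values in `[−∞, ∞)` (encoded in
`EReal` with `D n ≠ ⊤`), define `κ n := inf {n' ≥ n : D n' ≥ T n + ⋯ + T (n'−1)} ∈ ℕ∞`.
Then for all `m < n`, if `κ m ≥ n` then `κ m ≥ κ n`. -/
theorem kappa_monotone_interlacing
    (T : ℕ → ℝ) (hT : ∀ n, 0 ≤ T n)
    (D : ℕ → EReal) (hD : ∀ n, D n ≠ ⊤)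
    (κ : ℕ → ℕ∞)
    (hκ : ∀ n : ℕ, κ n = sInf {x : ℕ∞ | ∃ n' : ℕ, x = (n' : ℕ∞) ∧ n ≤ n' ∧
      ((∑ i ∈ Finset.Ico n n', T i : ℝ) : EReal) ≤ D n'}) :
    ∀ m n : ℕ, m < n → (n : ℕ∞) ≤ κ m → κ n ≤ κ m := by
  intro m n hmn h
  rw [hκ m] at h ⊢
  rw [hκ n]
  apply sInf_le_sInf
  rintro x ⟨n', rfl, hmn', hsum⟩
  have hle : (n : ℕ∞) ≤ (n' : ℕ∞) :=
    h.trans (sInf_le ⟨n', rfl, hmn', hsum⟩)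
  have hn : n ≤ n' := by exact_mod_cast hle
  refine ⟨n', rfl, hn, ?_⟩
  refine le_trans ?_ hsum
  have : (∑ i ∈ Finset.Ico n n', T i) ≤ ∑ i ∈ Finset.Ico m n', T i :=
    Finset.sum_le_sum_of_subset_of_nonneg
      (Finset.Ico_subset_Ico hmn.le le_rfl) (fun i _ _ => hT i)
  exact_mod_cast this
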